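/- Let {A_k}_{k≥1} be a sequence of d×d real matrices with all entries strictly positive, fix m ≥ 1, and set P_m^n = A_m A_{m+1} ⋯ A_n for n ≥ m, with entries p^{(m,n)}_{k,i}. Then τ(P_m^n) → 0 as n → ∞ if and only if the products P_m^n tend to row proportionality, i.e., for every pair of row indices k, s there exists a constant a = a(k,s,m) > 0 such that for every column index i the ratio p^{(m,n)}_{k,i}/p^{(m,n)}_{s,i} converges to a as n → ∞ (the limit being independent of i). -/

import Mathlib

open Filter

/-- The Hilbert projective metric on strictly positive vectors in `ℝ^d`. -/
noncomputable def hilbertDist {d : ℕ} (x y : Fin d → ℝ) : ℝ :=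
  Real.log (⨆ i : Fin d, ⨆ j : Fin d, (x i * y j) / (x j * y i))

/-- The Birkhoff contraction coefficient. -/
noncomputable def birkhoffCoeff {d : ℕ} (A : Matrix (Fin d) (Fin d) ℝ) : ℝ :=
  sSup {t : ℝ | ∃ x y : Fin d → ℝ, (∀ i, 0 < x i) ∧ (∀ i, 0 < y i) ∧
    0 < hilbertDist x y ∧ t = hilbertDist (A.mulVec x) (A.mulVec y) / hilbertDist x y}

/-- The forward product `P_m^n = A_m A_{m+1} ⋯ A_n`. -/
def fwdProd {d : ℕ} (A : ℕ → Matrix (Fin d) (Fin d) ℝ) (m n : ℕ) :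
    Matrix (Fin d) (Fin d) ℝ :=
  ((List.range' m (n + 1 - m)).map A).prod

open Finset

noncomputable def hsup {d : ℕ} (x y : Fin d → ℝ) : ℝ :=
  ⨆ i : Fin d, ⨆ j : Fin d, (x i * y j) / (x j * y i)

lemma hilbertDist_eq {d : ℕ} (x y : Fin d → ℝ) : hilbertDist x y = Real.log (hsup x y) := rfl

section basic
variable {d : ℕ} [NeZero d]

lemma le_hsup (x y : Fin d → ℝ) (i j : Fin d) : (x i * y j) / (x j * y i) ≤ hsup x y := by
  have h1 : (x i * y j) / (x j * y i) ≤ ⨆ j' : Fin d, (x i * y j') / (x j' * y i) :=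
    le_ciSup (f := fun j' => (x i * y j') / (x j' * y i)) ((Set.finite_range _).bddAbove) j
  have h2 : (⨆ j' : Fin d, (x i * y j') / (x j' * y i)) ≤ hsup x y :=
    le_ciSup (f := fun i => ⨆ j' : Fin d, (x i * y j') / (x j' * y i))
      ((Set.finite_range _).bddAbove) i
  exact h1.trans h2

lemma hsup_le {x y : Fin d → ℝ} {c : ℝ} (h : ∀ i j, (x i * y j) / (x j * y i) ≤ c) :
    hsup x y ≤ c :=
  ciSup_le fun i => ciSup_le fun j => h i j

lemma one_le_hsup {x y : Fin d → ℝ} (hx : ∀ i, 0 < x i) (hy : ∀ i, 0 < y i) :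
    1 ≤ hsup x y := by
  obtain ⟨i⟩ : Nonempty (Fin d) := inferInstance
  have := le_hsup x y i i
  rwa [div_self (mul_pos (hx i) (hy i)).ne'] at this

lemma hsup_pos {x y : Fin d → ℝ} (hx : ∀ i, 0 < x i) (hy : ∀ i, 0 < y i) : 0 < hsup x y :=
  lt_of_lt_of_le one_pos (one_le_hsup hx hy)

lemma hilbertDist_nonneg {x y : Fin d → ℝ} (hx : ∀ i, 0 < x i) (hy : ∀ i, 0 < y i) :
    0 ≤ hilbertDist x y :=
  Real.log_nonneg (one_le_hsup hx hy)

lemma ratio_cross {x y : Fin d → ℝ} (hy : ∀ i, 0 < y i) {p q : Fin d}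
    (h : x p / y p ≤ x q / y q) : x p * y q ≤ x q * y p := by
  rwa [div_le_div_iff₀ (hy p) (hy q)] at h

lemma div_ratio_eq {x y : Fin d → ℝ} (hx : ∀ i, 0 < x i) (hy : ∀ i, 0 < y i) (p q : Fin d) :
    (x p / y p) / (x q / y q) = (x p * y q) / (x q * y p) := by
  rw [div_eq_div_iff (div_pos (hx q) (hy q)).ne' (mul_pos (hx q) (hy p)).ne']
  field_simp [(hy p).ne', (hy q).ne']

lemma hsup_eq {x y : Fin d → ℝ} (hx : ∀ i, 0 < x i) (hy : ∀ i, 0 < y i) :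
    hsup x y = (univ.sup' univ_nonempty fun i => x i / y i) /
      (univ.inf' univ_nonempty fun i => x i / y i) := by
  obtain ⟨i0, -, hi0⟩ := exists_mem_eq_sup' (univ_nonempty (α := Fin d)) fun i => x i / y i
  obtain ⟨j0, -, hj0⟩ := exists_mem_eq_inf' (univ_nonempty (α := Fin d)) fun i => x i / y i
  rw [hi0, hj0, div_ratio_eq hx hy i0 j0]
  apply le_antisymm
  · apply hsup_le
    intro i j
    have h1 : x i * y i0 ≤ x i0 * y i :=
      ratio_cross hy (hi0 ▸ le_sup' (f := fun i => x i / y i) (mem_univ i))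
    have h2 : x j0 * y j ≤ x j * y j0 :=
      ratio_cross hy (hj0 ▸ inf'_le (f := fun i => x i / y i) (mem_univ j))
    rw [div_le_div_iff₀ (mul_pos (hx j) (hy i)) (mul_pos (hx j0) (hy i0))]
    nlinarith [mul_le_mul h1 h2 (mul_pos (hx j0) (hy j)).le (mul_pos (hx i0) (hy i)).le, hx i, hy j, hx i0, hy j0]
  · exact le_hsup x y i0 j0

end basic

section matrixlemmas
variable {d : ℕ} [NeZero d]

lemma mulVec_apply (P : Matrix (Fin d) (Fin d) ℝ) (v : Fin d → ℝ) (k : Fin d) :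
    P.mulVec v k = ∑ j, P k j * v j := rfl

lemma mulVec_pos {P : Matrix (Fin d) (Fin d) ℝ} (hP : ∀ a b, 0 < P a b)
    {v : Fin d → ℝ} (hv : ∀ i, 0 < v i) (k : Fin d) : 0 < P.mulVec v k := by
  rw [mulVec_apply]
  exact Finset.sum_pos (fun i _ => mul_pos (hP k i) (hv i)) univ_nonempty

lemma mulVec_nonneg {P : Matrix (Fin d) (Fin d) ℝ} (hP : ∀ a b, 0 ≤ P a b)
    {v : Fin d → ℝ} (hv : ∀ i, 0 ≤ v i) (k : Fin d) : 0 ≤ P.mulVec v k := by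
  rw [mulVec_apply]
  exact Finset.sum_nonneg fun i _ => mul_nonneg (hP k i) (hv i)

/-- columns comparison: if `u ≤ c • v` entrywise then `P u ≤ c • P v`. -/
lemma mulVec_le_mulVec {P : Matrix (Fin d) (Fin d) ℝ} (hP : ∀ a b, 0 ≤ P a b)
    {c : ℝ} {u v : Fin d → ℝ} (h : ∀ i, u i ≤ c * v i) (k : Fin d) :
    P.mulVec u k ≤ c * P.mulVec v k := by
  rw [mulVec_apply, mulVec_apply, Finset.mul_sum]
  refine Finset.sum_le_sum fun i _ => ?_
  have := mul_le_mul_of_nonneg_left (h i) (hP k i)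
  nlinarith [this]

lemma le_mulVec_mulVec {P : Matrix (Fin d) (Fin d) ℝ} (hP : ∀ a b, 0 ≤ P a b)
    {c : ℝ} {u v : Fin d → ℝ} (h : ∀ i, c * u i ≤ v i) (k : Fin d) :
    c * P.mulVec u k ≤ P.mulVec v k := by
  rw [mulVec_apply, mulVec_apply, Finset.mul_sum]
  refine Finset.sum_le_sum fun i _ => ?_
  have := mul_le_mul_of_nonneg_left (h i) (hP k i)
  nlinarith [this]

/-- rows comparison: if row `k` dominates `c` times row `s`, same for images. -/
lemma row_le_mulVec {P : Matrix (Fin d) (Fin d) ℝ} {c : ℝ} {k s : Fin d}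
    (h : ∀ j, c * P s j ≤ P k j) {v : Fin d → ℝ} (hv : ∀ i, 0 ≤ v i) :
    c * P.mulVec v s ≤ P.mulVec v k := by
  rw [mulVec_apply, mulVec_apply, Finset.mul_sum]
  refine Finset.sum_le_sum fun i _ => ?_
  have := mul_le_mul_of_nonneg_right (h i) (hv i)
  nlinarith [this]

lemma mulVec_row_le {P : Matrix (Fin d) (Fin d) ℝ} {c : ℝ} {k s : Fin d}
    (h : ∀ j, P k j ≤ c * P s j) {v : Fin d → ℝ} (hv : ∀ i, 0 ≤ v i) :
    P.mulVec v k ≤ c * P.mulVec v s := by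
  rw [mulVec_apply, mulVec_apply, Finset.mul_sum]
  refine Finset.sum_le_sum fun i _ => ?_
  have := mul_le_mul_of_nonneg_right (h i) (hv i)
  nlinarith [this]

/-- the key cross-ratio inequality transported to images. -/
lemma cross_mulVec {A : Matrix (Fin d) (Fin d) ℝ} (hA : ∀ a b, 0 ≤ A a b) {K : ℝ}
    (hcr : ∀ i j k s, A k i * A s j ≤ K * (A k j * A s i))
    {u y : Fin d → ℝ} (hu : ∀ i, 0 ≤ u i) (hy : ∀ i, 0 ≤ y i) (k s : Fin d) :
    A.mulVec u k * A.mulVec y s ≤ K * (A.mulVec u s * A.mulVec y k) := by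
  rw [mulVec_apply, mulVec_apply, mulVec_apply, mulVec_apply,
    Finset.sum_mul_sum, Finset.sum_mul_sum, Finset.mul_sum]
  refine Finset.sum_le_sum fun i _ => ?_
  rw [Finset.mul_sum]
  refine Finset.sum_le_sum fun j _ => ?_
  have h1 := mul_le_mul_of_nonneg_right (hcr i j k s) (mul_nonneg (hu i) (hy j))
  nlinarith [h1]

/-- contraction: Hilbert distance does not increase under a positive matrix. -/
lemma hilbert_contract {P : Matrix (Fin d) (Fin d) ℝ} (hP : ∀ a b, 0 < P a b)
    {x y : Fin d → ℝ} (hx : ∀ i, 0 < x i) (hy : ∀ i, 0 < y i) :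
    hilbertDist (P.mulVec x) (P.mulVec y) ≤ hilbertDist x y := by
  rw [hilbertDist_eq, hilbertDist_eq]
  have hX : ∀ k, 0 < P.mulVec x k := fun k => mulVec_pos hP hx k
  have hY : ∀ k, 0 < P.mulVec y k := fun k => mulVec_pos hP hy k
  apply Real.log_le_log (hsup_pos hX hY)
  rw [hsup_eq hx hy]
  set β := univ.sup' univ_nonempty fun i => x i / y i with hβ
  set α := univ.inf' univ_nonempty fun i => x i / y i with hα
  have hαpos : 0 < α := by
    rw [hα, Finset.lt_inf'_iff]
    exact fun i _ => div_pos (hx i) (hy i)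
  have hup : ∀ i, x i ≤ β * y i := fun i => by
    have h1 : x i / y i ≤ β := hβ ▸ le_sup' (f := fun i => x i / y i) (mem_univ i)
    rw [div_le_iff₀ (hy i)] at h1; linarith [h1]
  have hdn : ∀ i, α * y i ≤ x i := fun i => by
    have h1 : α ≤ x i / y i := hα ▸ inf'_le (f := fun i => x i / y i) (mem_univ i)
    rw [le_div_iff₀ (hy i)] at h1; linarith [h1]
  apply hsup_le
  intro k s
  have h1 : P.mulVec x k ≤ β * P.mulVec y k := mulVec_le_mulVec (fun a b => (hP a b).le) hup k
  have h2 : α * P.mulVec y s ≤ P.mulVec x s := le_mulVec_mulVec (fun a b => (hP a b).le) hdn s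
  rw [div_le_div_iff₀ (mul_pos (hX s) (hY k)) hαpos]
  have hβpos : 0 < β :=
    lt_of_lt_of_le (div_pos (hx (Classical.arbitrary _)) (hy _))
      (hβ ▸ le_sup' (f := fun i => x i / y i) (mem_univ _))
  nlinarith [mul_le_mul_of_nonneg_right h1 (mul_nonneg hαpos.le (hY s).le),
    mul_le_mul_of_nonneg_left h2 (mul_nonneg hβpos.le (hY k).le)]

end matrixlemmas

section fwdprod
variable {d : ℕ} [NeZero d]

lemma fwdProd_self (A : ℕ → Matrix (Fin d) (Fin d) ℝ) (m : ℕ) : fwdProd A m m = A m := by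
  unfold fwdProd
  rw [show m + 1 - m = 1 by omega, List.range'_one]
  simp

lemma fwdProd_succ (A : ℕ → Matrix (Fin d) (Fin d) ℝ) {m n : ℕ} (h : m ≤ n) :
    fwdProd A m (n + 1) = fwdProd A m n * A (n + 1) := by
  unfold fwdProd
  rw [show n + 1 + 1 - m = (n + 1 - m) + 1 by omega, List.range'_concat,
    List.map_append, List.prod_append, show m + 1 * (n + 1 - m) = n + 1 by omega]
  simp

lemma fwdProd_pos {A : ℕ → Matrix (Fin d) (Fin d) ℝ} (hA : ∀ k a b, 0 < A k a b)
    {m n : ℕ} (h : m ≤ n) : ∀ a b, 0 < fwdProd A m n a b := by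
  induction n, h using Nat.le_induction with
  | base => rw [fwdProd_self]; exact hA m
  | succ n hn ih =>
    intro a b
    rw [fwdProd_succ A hn, Matrix.mul_apply]
    exact Finset.sum_pos (fun j _ => mul_pos (ih a j) (hA (n + 1) j b)) univ_nonempty

lemma listProd_mulVec_pos {L : List (Matrix (Fin d) (Fin d) ℝ)}
    (hL : ∀ B ∈ L, ∀ a b, 0 < B a b) {v : Fin d → ℝ} (hv : ∀ i, 0 < v i) :
    ∀ k, 0 < L.prod.mulVec v k := by
  induction L with
  | nil => simpa [Matrix.one_mulVec] using hv
  | cons B L ih =>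
    intro k
    rw [List.prod_cons, ← Matrix.mulVec_mulVec]
    exact mulVec_pos (hL B (List.mem_cons_self)) (ih (fun C hC => hL C (List.mem_cons_of_mem B hC))) k

lemma fwdProd_mulVec_pos {A : ℕ → Matrix (Fin d) (Fin d) ℝ} (hA : ∀ k a b, 0 < A k a b)
    (m n : ℕ) {v : Fin d → ℝ} (hv : ∀ i, 0 < v i) (k : Fin d) :
    0 < (fwdProd A m n).mulVec v k := by
  refine listProd_mulVec_pos ?_ hv k
  intro B hB
  obtain ⟨t, -, rfl⟩ := List.mem_map.1 hB
  exact hA t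

end fwdprod

lemma birkhoffCoeff_nonneg {d : ℕ} {A : Matrix (Fin d) (Fin d) ℝ}
    (h : ∀ v : Fin d → ℝ, (∀ i, 0 < v i) → ∀ k, 0 < A.mulVec v k) :
    0 ≤ birkhoffCoeff A := by
  apply Real.sSup_nonneg
  rintro t ⟨x, y, hx, hy, hD, rfl⟩
  rcases isEmpty_or_nonempty (Fin d) with hE | hN
  · exfalso
    have : hilbertDist x y = 0 := by
      simp [hilbertDist, Real.iSup_of_isEmpty]
    linarith [hD]
  · haveI : NeZero d := ⟨fun h0 => by subst h0; exact hN.elim (fun i => i.elim0)⟩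
    exact div_nonneg (hilbertDist_nonneg (fun k => h x hx k) (fun k => h y hy k)) hD.le

lemma birkhoffCoeff_bddAbove {d : ℕ} [NeZero d] {A : Matrix (Fin d) (Fin d) ℝ}
    (hA : ∀ a b, 0 < A a b) :
    BddAbove {t : ℝ | ∃ x y : Fin d → ℝ, (∀ i, 0 < x i) ∧ (∀ i, 0 < y i) ∧
      0 < hilbertDist x y ∧ t = hilbertDist (A.mulVec x) (A.mulVec y) / hilbertDist x y} := by
  refine ⟨1, ?_⟩
  rintro t ⟨x, y, hx, hy, hD, rfl⟩
  rw [div_le_one hD]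
  exact hilbert_contract hA hx hy

lemma tendsto_finset_sup' {ι κ : Type*} {l : Filter κ} (s : Finset ι) (hs : s.Nonempty)
    {f : ι → κ → ℝ} {g : ι → ℝ} (h : ∀ i ∈ s, Filter.Tendsto (f i) l (nhds (g i))) :
    Filter.Tendsto (fun t => s.sup' hs fun i => f i t) l (nhds (s.sup' hs g)) := by
  revert h
  refine Finset.Nonempty.cons_induction
    (motive := fun s hs => (∀ i ∈ s, Filter.Tendsto (f i) l (nhds (g i))) →
      Filter.Tendsto (fun t => s.sup' hs fun i => f i t) l (nhds (s.sup' hs g))) ?_ ?_ hs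
  · intro a h
    have := h a (by simp)
    convert this using 2 <;> simp
  · intro a s ha hs ih h
    have h2 := Filter.Tendsto.max (h a (by simp)) (ih fun i hi => h i (Finset.mem_cons_of_mem hi))
    convert h2 using 2
    · exact Finset.sup'_cons hs _
    · exact Finset.sup'_cons hs _

/-- Upper bound on the Birkhoff coefficient in terms of the cross-ratio bound `K`. -/
lemma birkhoff_le {d : ℕ} [NeZero d] {A : Matrix (Fin d) (Fin d) ℝ} (hA : ∀ a b, 0 < A a b)
    {K : ℝ} (hK : 1 ≤ K) (hcr : ∀ i j k s, A k i * A s j ≤ K * (A k j * A s i)) :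
    birkhoffCoeff A ≤
      max (Real.sqrt (Real.log K)) ((K - 1) * Real.exp (Real.sqrt (Real.log K))) := by
  set δ := Real.log K with hδdef
  have hδ0 : 0 ≤ δ := Real.log_nonneg hK
  have hBnn : 0 ≤ max (Real.sqrt δ) ((K - 1) * Real.exp (Real.sqrt δ)) :=
    le_max_of_le_right (mul_nonneg (by linarith) (Real.exp_pos _).le)
  apply Real.sSup_le _ hBnn
  rintro t ⟨x, y, hx, hy, hD, rfl⟩
  set D := hilbertDist x y with hDdef
  have hX : ∀ k, 0 < A.mulVec x k := fun k => mulVec_pos hA hx k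
  have hY : ∀ k, 0 < A.mulVec y k := fun k => mulVec_pos hA hy k
  have hS'pos : 0 < hsup (A.mulVec x) (A.mulVec y) := hsup_pos hX hY
  have hD'0 : 0 ≤ hilbertDist (A.mulVec x) (A.mulVec y) := hilbertDist_nonneg hX hY
  -- first bound : D' ≤ δ
  have hSK : hsup (A.mulVec x) (A.mulVec y) ≤ K := by
    apply hsup_le
    intro k s
    rw [div_le_iff₀ (mul_pos (hX s) (hY k))]
    have := cross_mulVec (fun a b => (hA a b).le) hcr (fun i => (hx i).le) (fun i => (hy i).le) k s
    linarith [this]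
  have hD'δ : hilbertDist (A.mulVec x) (A.mulVec y) ≤ δ := by
    rw [hilbertDist_eq]
    exact Real.log_le_log hS'pos hSK
  -- α, β
  set β := univ.sup' univ_nonempty fun i => x i / y i with hβ
  set α := univ.inf' univ_nonempty fun i => x i / y i with hα
  have hαpos : 0 < α := by
    rw [hα, Finset.lt_inf'_iff]; exact fun i _ => div_pos (hx i) (hy i)
  have hup : ∀ i, x i ≤ β * y i := fun i => by
    have h1 : x i / y i ≤ β := hβ ▸ le_sup' (f := fun i => x i / y i) (mem_univ i)
    rw [div_le_iff₀ (hy i)] at h1; linarith [h1]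
  have hdn : ∀ i, α * y i ≤ x i := fun i => by
    have h1 : α ≤ x i / y i := hα ▸ inf'_le (f := fun i => x i / y i) (mem_univ i)
    rw [le_div_iff₀ (hy i)] at h1; linarith [h1]
  have hαβ : α ≤ β := by
    have := (hdn (Classical.arbitrary _)).trans (hup (Classical.arbitrary _))
    exact le_of_mul_le_mul_right this (hy _)
  have hρ : hsup x y = β / α := hsup_eq hx hy
  have hexpD : Real.exp D = β / α := by
    rw [hDdef, hilbertDist_eq, Real.exp_log (hsup_pos hx hy), hρ]
  -- second bound : D' ≤ (K-1) * (β/α - 1)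
  have hkey : hsup (A.mulVec x) (A.mulVec y) ≤ 1 + (K - 1) * (β / α - 1) := by
    apply hsup_le
    intro k s
    set u : Fin d → ℝ := fun i => x i - α * y i with hu
    have hu0 : ∀ i, 0 ≤ u i := fun i => by simp [hu]; linarith [hdn i]
    have huX : ∀ a, A.mulVec u a = A.mulVec x a - α * A.mulVec y a := by
      intro a
      rw [mulVec_apply, mulVec_apply, mulVec_apply, Finset.mul_sum, ← Finset.sum_sub_distrib]
      exact Finset.sum_congr rfl fun i _ => by simp [hu]; ring
    have h1 : A.mulVec u k * A.mulVec y s ≤ K * (A.mulVec u s * A.mulVec y k) :=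
      cross_mulVec (fun a b => (hA a b).le) hcr hu0 (fun i => (hy i).le) k s
    have h2 : A.mulVec u s ≤ (β - α) * A.mulVec y s := by
      apply mulVec_le_mulVec (fun a b => (hA a b).le)
      intro i; simp only [hu]; linarith [hup i]
    have hUk : 0 ≤ A.mulVec u k := mulVec_nonneg (fun a b => (hA a b).le) hu0 k
    have hUs : 0 ≤ A.mulVec u s := mulVec_nonneg (fun a b => (hA a b).le) hu0 s
    have hXk : A.mulVec x k = A.mulVec u k + α * A.mulVec y k := by rw [huX k]; ring
    have hXs : A.mulVec x s = A.mulVec u s + α * A.mulVec y s := by rw [huX s]; ring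
    rw [div_le_iff₀ (mul_pos (hX s) (hY k))]
    have hgoal : A.mulVec x k * A.mulVec y s * α ≤
        (α + (K - 1) * (β - α)) * (A.mulVec x s * A.mulVec y k) := by
      rw [hXk, hXs]
      nlinarith [mul_le_mul_of_nonneg_left h1 hαpos.le,
        mul_nonneg (mul_nonneg (sub_nonneg.2 hK) (hY k).le)
          (mul_nonneg hαpos.le (sub_nonneg.2 h2)),
        mul_nonneg (mul_nonneg (mul_nonneg (sub_nonneg.2 hK) (sub_nonneg.2 hαβ)) hUs) (hY k).le,
        hY k, hY s, mul_pos (hY k) (hY s), hαpos]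
    have hfinal : 1 + (K - 1) * (β / α - 1) = (α + (K - 1) * (β - α)) / α := by
      field_simp
    rw [hfinal]
    rw [div_mul_eq_mul_div, le_div_iff₀ hαpos] at *
    linarith [hgoal]
  -- D' ≤ (K-1) * (exp D - 1) ≤ (K-1) * D * exp D
  have hD'2 : hilbertDist (A.mulVec x) (A.mulVec y) ≤ (K - 1) * (Real.exp D - 1) := by
    have h3 : hilbertDist (A.mulVec x) (A.mulVec y) ≤
        hsup (A.mulVec x) (A.mulVec y) - 1 := by
      rw [hilbertDist_eq]
      exact Real.log_le_sub_one_of_pos hS'pos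
    rw [hexpD]
    linarith [hkey, h3]
  have hED : Real.exp D - 1 ≤ D * Real.exp D := by
    have h4 := Real.add_one_le_exp (-D)
    have h5 : Real.exp (-D) = (Real.exp D)⁻¹ := Real.exp_neg D
    have h6 : (0:ℝ) < Real.exp D := Real.exp_pos D
    rw [h5] at h4
    have h7 := mul_le_mul_of_nonneg_right h4 h6.le
    rw [inv_mul_cancel₀ h6.ne'] at h7
    nlinarith [h7]
  -- case split
  rcases le_or_gt (Real.sqrt δ) D with hc | hc
  · refine le_trans ?_ (le_max_left _ _)
    rw [div_le_iff₀ hD]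
    calc hilbertDist (A.mulVec x) (A.mulVec y) ≤ δ := hD'δ
    _ = Real.sqrt δ * Real.sqrt δ := (Real.mul_self_sqrt hδ0).symm
    _ ≤ Real.sqrt δ * D := by
      exact mul_le_mul_of_nonneg_left hc (Real.sqrt_nonneg δ)
  · refine le_trans ?_ (le_max_right _ _)
    rw [div_le_iff₀ hD]
    have h8 : Real.exp D ≤ Real.exp (Real.sqrt δ) := Real.exp_le_exp.2 hc.le
    calc hilbertDist (A.mulVec x) (A.mulVec y) ≤ (K - 1) * (Real.exp D - 1) := hD'2
    _ ≤ (K - 1) * (D * Real.exp D) := by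
      apply mul_le_mul_of_nonneg_left hED (by linarith)
    _ ≤ (K - 1) * (D * Real.exp (Real.sqrt δ)) := by
      apply mul_le_mul_of_nonneg_left _ (by linarith : (0:ℝ) ≤ K - 1)
      exact mul_le_mul_of_nonneg_left h8 hD.le
    _ = (K - 1) * Real.exp (Real.sqrt δ) * D := by ring

lemma hsup_eq_pairs {d : ℕ} [NeZero d] (x y : Fin d → ℝ) :
    hsup x y = (univ : Finset (Fin d × Fin d)).sup' univ_nonempty
      (fun p => (x p.1 * y p.2) / (x p.2 * y p.1)) := by
  apply le_antisymm
  · exact hsup_le fun i j =>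
      le_sup' (f := fun p : Fin d × Fin d => (x p.1 * y p.2) / (x p.2 * y p.1)) (mem_univ (i, j))
  · exact Finset.sup'_le _ _ fun p _ => le_hsup x y p.1 p.2

lemma two_le_exp_one : (2:ℝ) ≤ Real.exp 1 := by
  have := Real.add_one_le_exp 1; linarith

lemma phi_mono {c c' : ℝ} (h0 : 0 < c) (h : c ≤ c') :
    Real.log ((1 + Real.exp 1 * c) / (Real.exp 1 + c)) ≤
      Real.log ((1 + Real.exp 1 * c') / (Real.exp 1 + c')) := by
  have he : 2 ≤ Real.exp 1 := two_le_exp_one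
  have hc' : 0 < c' := lt_of_lt_of_le h0 h
  apply Real.log_le_log (by positivity)
  rw [div_le_div_iff₀ (by positivity) (by positivity)]
  nlinarith [mul_nonneg (sub_nonneg.2 h) (by nlinarith : (0:ℝ) ≤ Real.exp 1 ^ 2 - 1)]

lemma phi_pos {c : ℝ} (h : 1 < c) :
    0 < Real.log ((1 + Real.exp 1 * c) / (Real.exp 1 + c)) := by
  have he : 2 ≤ Real.exp 1 := two_le_exp_one
  apply Real.log_pos
  rw [lt_div_iff₀ (by positivity)]
  nlinarith

/-- Lower bound for the Birkhoff coefficient from a single cross ratio. -/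
lemma birkhoff_ge {d : ℕ} {P : Matrix (Fin d) (Fin d) ℝ} (hP : ∀ a b, 0 < P a b)
    (k s i j : Fin d) (hij : i ≠ j) :
    Real.log ((1 + Real.exp 1 * Real.sqrt ((P k j * P s i) / (P k i * P s j))) /
      (Real.exp 1 + Real.sqrt ((P k j * P s i) / (P k i * P s j)))) ≤ birkhoffCoeff P := by
  haveI : NeZero d := ⟨fun h0 => by subst h0; exact i.elim0⟩
  set e := Real.exp 1 with he_def
  have he1 : 2 ≤ e := two_le_exp_one
  have hepos : 0 < e := by linarith
  have hki := hP k i; have hkj := hP k j; have hsi := hP s i; have hsj := hP s j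
  set c := Real.sqrt ((P k j * P s i) / (P k i * P s j)) with hc_def
  have hcpos : 0 < c := Real.sqrt_pos.2 (div_pos (mul_pos hkj hsi) (mul_pos hki hsj))
  set G := Real.sqrt ((P k j / P k i) * (P s j / P s i)) with hG_def
  have hGpos : 0 < G := Real.sqrt_pos.2 (mul_pos (div_pos hkj hki) (div_pos hsj hsi))
  -- key algebraic relations
  have hbk : P k j = c * G * P k i := by
    have h1 : c * G = Real.sqrt (((P k j * P s i) / (P k i * P s j)) *
        ((P k j / P k i) * (P s j / P s i))) :=
      (Real.sqrt_mul (div_pos (mul_pos hkj hsi) (mul_pos hki hsj)).le _).symm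
    have h2 : ((P k j * P s i) / (P k i * P s j)) * ((P k j / P k i) * (P s j / P s i)) =
        (P k j / P k i) ^ 2 := by
      field_simp
    rw [h2, Real.sqrt_sq (div_pos hkj hki).le] at h1
    rw [eq_div_iff hki.ne'] at h1
    linarith [h1]
  have hbs : c * P s j = G * P s i := by
    have h1 : c * Real.sqrt ((P s j / P s i) ^ 2) = Real.sqrt
        ((((P k j * P s i) / (P k i * P s j))) * ((P s j / P s i) ^ 2)) :=
      (Real.sqrt_mul (div_pos (mul_pos hkj hsi) (mul_pos hki hsj)).le _).symm
    have h2 : (((P k j * P s i) / (P k i * P s j))) * ((P s j / P s i) ^ 2) =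
        (P k j / P k i) * (P s j / P s i) := by
      field_simp
    rw [h2, Real.sqrt_sq (div_pos hsj hsi).le, ← hG_def, ← mul_div_assoc] at h1
    exact (div_eq_iff hsi.ne').1 h1
  set lam := e / G with hlam_def
  set mu := 1 / (e * G) with hmu_def
  have hlam : 0 < lam := by positivity
  have hmu : 0 < mu := by positivity
  set xv : ℝ → Fin d → ℝ := fun ε l => if l = i then 1 else if l = j then lam else ε with hxv
  set yv : ℝ → Fin d → ℝ := fun ε l => if l = i then 1 else if l = j then mu else ε with hyv
  have hxpos : ∀ ε, 0 < ε → ∀ l, 0 < xv ε l := by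
    intro ε hε l; simp only [hxv]; split_ifs <;> [exact one_pos; exact hlam; exact hε]
  have hypos : ∀ ε, 0 < ε → ∀ l, 0 < yv ε l := by
    intro ε hε l; simp only [hyv]; split_ifs <;> [exact one_pos; exact hmu; exact hε]
  have he2 : (1:ℝ) ≤ e ^ 2 := by nlinarith
  -- hilbertDist (xv ε) (yv ε) = 2
  have hratio : ∀ (ε : ℝ), ε ≠ 0 →
      (fun l => xv ε l / yv ε l) = fun l => if l = j then e ^ 2 else 1 := by
    intro ε hε
    funext l
    rcases eq_or_ne l j with rfl | hlj
    · simp only [hxv, hyv, if_neg (Ne.symm hij), if_pos rfl, if_true]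
      rw [hlam_def, hmu_def]
      field_simp
    · rcases eq_or_ne l i with rfl | hli
      · simp [hxv, hyv, hlj]
      · simp only [hxv, hyv, if_neg hli, if_neg hlj]
        simp [div_self hε, hlj]
  have hD2 : ∀ (ε : ℝ), 0 < ε → hilbertDist (xv ε) (yv ε) = 2 := by
    intro ε hε
    rw [hilbertDist_eq, hsup_eq (hxpos ε hε) (hypos ε hε), hratio ε hε.ne']
    have hsupr : (univ.sup' univ_nonempty fun l : Fin d => if l = j then e ^ 2 else 1) = e ^ 2 := by
      apply le_antisymm
      · apply Finset.sup'_le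
        intro l _
        split_ifs
        · exact le_rfl
        · linarith
      · have h5 := le_sup' (f := fun l : Fin d => if l = j then e ^ 2 else 1) (mem_univ j)
        simpa only [eq_self_iff_true, if_true] using h5
    have hinfr : (univ.inf' univ_nonempty fun l : Fin d => if l = j then e ^ 2 else 1) = 1 := by
      apply le_antisymm
      · have h5 := inf'_le (f := fun l : Fin d => if l = j then e ^ 2 else 1) (mem_univ i)
        simpa only [if_neg hij] using h5
      · apply Finset.le_inf'
        intro l _
        split_ifs
        · linarith
        · exact le_rfl
    rw [hsupr, hinfr, div_one, he_def, Real.log_pow, Real.log_exp]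
    norm_num
  -- membership: τ(P) dominates log hsup / 2 for every ε > 0
  have hBdd := birkhoffCoeff_bddAbove hP
  have hmem : ∀ (ε : ℝ), 0 < ε →
      Real.log (hsup (P.mulVec (xv ε)) (P.mulVec (yv ε))) / 2 ≤ birkhoffCoeff P := by
    intro ε hε
    have hm : hilbertDist (P.mulVec (xv ε)) (P.mulVec (yv ε)) / hilbertDist (xv ε) (yv ε) ∈
        {t : ℝ | ∃ x y : Fin d → ℝ, (∀ i, 0 < x i) ∧ (∀ i, 0 < y i) ∧
          0 < hilbertDist x y ∧ t = hilbertDist (P.mulVec x) (P.mulVec y) / hilbertDist x y} :=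
      ⟨xv ε, yv ε, hxpos ε hε, hypos ε hε, by rw [hD2 ε hε]; norm_num, rfl⟩
    have h2 := le_csSup hBdd hm
    rwa [hD2 ε hε, hilbertDist_eq] at h2
  -- continuity in ε at 0
  have hcontX : ∀ a, Continuous fun ε => P.mulVec (xv ε) a := by
    intro a
    have hrw : (fun ε => P.mulVec (xv ε) a) = fun ε => ∑ l, P a l * xv ε l := by
      funext ε; rw [mulVec_apply]
    rw [hrw]
    apply continuous_finset_sum
    intro l _
    apply Continuous.mul continuous_const
    by_cases hli : l = i
    · simp only [hxv, hli]
      simp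
      exact continuous_const
    · by_cases hlj : l = j
      · simp only [hxv, hli, hlj]
        simp [Ne.symm hij]
        exact continuous_const
      · simp only [hxv, if_neg hli, if_neg hlj]
        exact continuous_id
  have hcontY : ∀ a, Continuous fun ε => P.mulVec (yv ε) a := by
    intro a
    have hrw : (fun ε => P.mulVec (yv ε) a) = fun ε => ∑ l, P a l * yv ε l := by
      funext ε; rw [mulVec_apply]
    rw [hrw]
    apply continuous_finset_sum
    intro l _
    apply Continuous.mul continuous_const
    by_cases hli : l = i
    · simp only [hyv, hli]
      simp
      exact continuous_const
    · by_cases hlj : l = j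
      · simp only [hyv, hli, hlj]
        simp [Ne.symm hij]
        exact continuous_const
      · simp only [hyv, if_neg hli, if_neg hlj]
        exact continuous_id
  -- value at 0
  have hmvX0 : ∀ a, P.mulVec (xv 0) a = P a i + lam * P a j := by
    intro a
    rw [mulVec_apply]
    have hcongr : ∀ l ∈ univ, P a l * xv 0 l =
        (if l = i then P a i else 0) + (if l = j then lam * P a j else 0) := by
      intro l _
      rcases eq_or_ne l i with rfl | hli
      · simp [hxv, hij]
      · rcases eq_or_ne l j with rfl | hlj
        · simp [hxv, hli, mul_comm]
        · simp [hxv, hli, hlj]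
    rw [Finset.sum_congr rfl hcongr, Finset.sum_add_distrib,
      Finset.sum_ite_eq' univ i, Finset.sum_ite_eq' univ j]
    simp
  have hmvY0 : ∀ a, P.mulVec (yv 0) a = P a i + mu * P a j := by
    intro a
    rw [mulVec_apply]
    have hcongr : ∀ l ∈ univ, P a l * yv 0 l =
        (if l = i then P a i else 0) + (if l = j then mu * P a j else 0) := by
      intro l _
      rcases eq_or_ne l i with rfl | hli
      · simp [hyv, hij]
      · rcases eq_or_ne l j with rfl | hlj
        · simp [hyv, hli, mul_comm]
        · simp [hyv, hli, hlj]
    rw [Finset.sum_congr rfl hcongr, Finset.sum_add_distrib,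
      Finset.sum_ite_eq' univ i, Finset.sum_ite_eq' univ j]
    simp
  have hX0pos : ∀ a, 0 < P.mulVec (xv 0) a := by
    intro a; rw [hmvX0 a]; exact add_pos (hP a i) (mul_pos hlam (hP a j))
  have hY0pos : ∀ a, 0 < P.mulVec (yv 0) a := by
    intro a; rw [hmvY0 a]; exact add_pos (hP a i) (mul_pos hmu (hP a j))
  -- limit of the bound
  have hS0pos : 0 < hsup (P.mulVec (xv 0)) (P.mulVec (yv 0)) := hsup_pos hX0pos hY0pos
  have htendS : Filter.Tendsto (fun ε => hsup (P.mulVec (xv ε)) (P.mulVec (yv ε)))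
      (nhds 0) (nhds (hsup (P.mulVec (xv 0)) (P.mulVec (yv 0)))) := by
    have hrw : ∀ ε : ℝ, hsup (P.mulVec (xv ε)) (P.mulVec (yv ε)) =
        (univ : Finset (Fin d × Fin d)).sup' univ_nonempty
          (fun p => (P.mulVec (xv ε) p.1 * P.mulVec (yv ε) p.2) /
            (P.mulVec (xv ε) p.2 * P.mulVec (yv ε) p.1)) := fun ε => hsup_eq_pairs _ _
    simp only [hrw]
    apply tendsto_finset_sup'
    intro p _
    have hnum : ContinuousAt (fun ε => P.mulVec (xv ε) p.1 * P.mulVec (yv ε) p.2) 0 :=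
      ((hcontX p.1).continuousAt).mul ((hcontY p.2).continuousAt)
    have hden : ContinuousAt (fun ε => P.mulVec (xv ε) p.2 * P.mulVec (yv ε) p.1) 0 :=
      ((hcontX p.2).continuousAt).mul ((hcontY p.1).continuousAt)
    exact (hnum.div hden (mul_pos (hX0pos p.2) (hY0pos p.1)).ne')
  have htend : Filter.Tendsto
      (fun ε => Real.log (hsup (P.mulVec (xv ε)) (P.mulVec (yv ε))) / 2)
      (nhdsWithin 0 (Set.Ioi 0))
      (nhds (Real.log (hsup (P.mulVec (xv 0)) (P.mulVec (yv 0))) / 2)) := by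
    have h3 := ((Real.continuousAt_log hS0pos.ne').tendsto.comp htendS).div_const (2:ℝ)
    exact h3.mono_left nhdsWithin_le_nhds
  have hlim_le : Real.log (hsup (P.mulVec (xv 0)) (P.mulVec (yv 0))) / 2 ≤ birkhoffCoeff P := by
    refine le_of_tendsto htend ?_
    filter_upwards [self_mem_nhdsWithin] with ε hε
    exact hmem ε hε
  -- evaluation of the single (k,s) term at 0
  have hterm := le_hsup (P.mulVec (xv 0)) (P.mulVec (yv 0)) k s
  have hTval : (P.mulVec (xv 0) k * P.mulVec (yv 0) s) / (P.mulVec (xv 0) s * P.mulVec (yv 0) k)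
      = ((1 + e * c) / (e + c)) ^ 2 := by
    rw [hmvX0 k, hmvX0 s, hmvY0 k, hmvY0 s]
    have hsj' : P s j = (G / c) * P s i := by
      rw [div_mul_eq_mul_div, eq_div_iff hcpos.ne']
      linarith [hbs]
    rw [hbk, hsj', hlam_def, hmu_def]
    have hec : (0:ℝ) < e + c := by positivity
    field_simp
    ring
  have hTpos : 0 < ((1 + e * c) / (e + c)) ^ 2 := by positivity
  have hlog_le : Real.log (((1 + e * c) / (e + c)) ^ 2) ≤
      Real.log (hsup (P.mulVec (xv 0)) (P.mulVec (yv 0))) :=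
    Real.log_le_log hTpos (hTval ▸ hterm)
  have hfin : Real.log (((1 + e * c) / (e + c)) ^ 2) = 2 * Real.log ((1 + e * c) / (e + c)) := by
    rw [Real.log_pow]; norm_num
  rw [hfin] at hlog_le
  linarith [hlim_le, hlog_le]

/-- For strictly positive matrices, `τ(P_m^n) → 0` iff the products
`P_m^n` tend to row proportionality. -/
theorem stmt3 {d : ℕ} (A : ℕ → Matrix (Fin d) (Fin d) ℝ)
    (hA : ∀ k i j, 0 < A k i j) (m : ℕ) :
    Tendsto (fun n => birkhoffCoeff (fwdProd A m n)) atTop (nhds 0) ↔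
    ∀ k s : Fin d, ∃ a : ℝ, 0 < a ∧ ∀ i : Fin d,
      Tendsto (fun n => fwdProd A m n k i / fwdProd A m n s i) atTop (nhds a) := by
  rcases Nat.eq_zero_or_pos d with hd0 | hdpos
  · subst hd0
    constructor
    · intro _ k
      exact k.elim0
    · intro _
      have hz : ∀ n, birkhoffCoeff (fwdProd A m n) = 0 := by
        intro n
        unfold birkhoffCoeff
        convert Real.sSup_empty
        rw [Set.eq_empty_iff_forall_notMem]
        rintro t ⟨x, y, hx, hy, hD, rfl⟩
        have : hilbertDist x y = 0 := by simp [hilbertDist, Real.iSup_of_isEmpty]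
        linarith
      simp only [hz]
      exact tendsto_const_nhds
  haveI : NeZero d := ⟨hdpos.ne'⟩
  have hpos : ∀ n, m ≤ n → ∀ a b, 0 < fwdProd A m n a b := fun n hn =>
    fwdProd_pos (fun t a b => hA t a b) hn
  constructor
  · -- τ → 0  ⇒  row proportionality
    intro hτ k s
    have key : ∀ (i' j' : Fin d), i' ≠ j' → ∀ b > (1:ℝ), ∀ᶠ n in atTop,
        (fwdProd A m n k i' * fwdProd A m n s j') /
          (fwdProd A m n k j' * fwdProd A m n s i') < b := by
      intro i' j' hij' b hb
      have hsb : 1 < Real.sqrt b := by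
        rw [show (1:ℝ) = Real.sqrt 1 by simp]
        exact Real.sqrt_lt_sqrt (by norm_num) hb
      have hφ := phi_pos hsb
      filter_upwards [Tendsto.eventually_lt_const hφ hτ, eventually_ge_atTop m] with n hn hnm
      have hQpos : ∀ a b, 0 < fwdProd A m n a b := hpos n hnm
      have hlb := birkhoff_ge hQpos k s j' i' (Ne.symm hij')
      set CR := (fwdProd A m n k i' * fwdProd A m n s j') /
        (fwdProd A m n k j' * fwdProd A m n s i') with hCR
      have hCRpos : 0 < CR :=
        div_pos (mul_pos (hQpos k i') (hQpos s j')) (mul_pos (hQpos k j') (hQpos s i'))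
      have hclt : Real.sqrt CR < Real.sqrt b := by
        by_contra hge
        push_neg at hge
        have h1 := phi_mono (by linarith : (0:ℝ) < Real.sqrt b) hge
        linarith [hn, h1, hlb]
      calc CR = Real.sqrt CR ^ 2 := (Real.sq_sqrt hCRpos.le).symm
      _ < Real.sqrt b ^ 2 := by
        apply pow_lt_pow_left₀ hclt (Real.sqrt_nonneg _)
        norm_num
      _ = b := Real.sq_sqrt (by linarith)
    set rat : ℕ → Fin d → ℝ := fun n i => fwdProd A m n k i / fwdProd A m n s i with hrat
    set αf : ℕ → ℝ := fun n => univ.inf' univ_nonempty (rat n) with hαf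
    set βf : ℕ → ℝ := fun n => univ.sup' univ_nonempty (rat n) with hβf
    have hratpos : ∀ n, m ≤ n → ∀ i, 0 < rat n i := fun n hn i =>
      div_pos (hpos n hn k i) (hpos n hn s i)
    have hαpos : ∀ n, m ≤ n → 0 < αf n := by
      intro n hn
      rw [hαf, Finset.lt_inf'_iff]
      exact fun i _ => hratpos n hn i
    have hαβ : ∀ n, αf n ≤ βf n :=
      fun n => le_trans (inf'_le _ (mem_univ (Classical.arbitrary _))) (le_sup' _ (mem_univ _))
    have hmono : ∀ n, m ≤ n → αf n ≤ αf (n + 1) ∧ βf (n + 1) ≤ βf n := by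
      intro n hn
      have hcol : ∀ a (i : Fin d), fwdProd A m (n+1) a i =
          (fwdProd A m n).mulVec (fun t => A (n+1) t i) a := by
        intro a i
        rw [fwdProd_succ A hn, Matrix.mul_apply, mulVec_apply]
      have hden : ∀ i : Fin d, 0 < fwdProd A m (n+1) s i :=
        fun i => hpos (n+1) (le_trans hn (Nat.le_succ n)) s i
      constructor
      · apply Finset.le_inf'
        intro i _
        have hlow : ∀ t, αf n * fwdProd A m n s t ≤ fwdProd A m n k t := by
          intro t
          have h1 : αf n ≤ rat n t := inf'_le _ (mem_univ t)
          rw [hrat] at h1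
          rw [le_div_iff₀ (hpos n hn s t)] at h1
          linarith [h1]
        have h2 := row_le_mulVec hlow (fun t => (hA (n+1) t i).le)
        show αf n ≤ fwdProd A m (n+1) k i / fwdProd A m (n+1) s i
        rw [le_div_iff₀ (hden i), hcol k i, hcol s i]
        exact h2
      · apply Finset.sup'_le
        intro i _
        have hhigh : ∀ t, fwdProd A m n k t ≤ βf n * fwdProd A m n s t := by
          intro t
          have h1 : rat n t ≤ βf n := le_sup' _ (mem_univ t)
          rw [hrat] at h1
          rw [div_le_iff₀ (hpos n hn s t)] at h1
          linarith [h1]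
        have h2 := mulVec_row_le hhigh (fun t => (hA (n+1) t i).le)
        show fwdProd A m (n+1) k i / fwdProd A m (n+1) s i ≤ βf n
        rw [div_le_iff₀ (hden i), hcol k i, hcol s i]
        exact h2
    have hαs_mono : Monotone (fun t => αf (t + m)) := by
      apply monotone_nat_of_le_succ
      intro t
      have h1 := (hmono (t + m) (Nat.le_add_left m t)).1
      rwa [show t + m + 1 = t + 1 + m by omega] at h1
    have hβs_anti : Antitone (fun t => βf (t + m)) := by
      apply antitone_nat_of_succ_le
      intro t
      have h1 := (hmono (t + m) (Nat.le_add_left m t)).2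
      rwa [show t + m + 1 = t + 1 + m by omega] at h1
    have hbddα : BddAbove (Set.range fun t => αf (t + m)) := by
      refine ⟨βf m, ?_⟩
      rintro _ ⟨t, rfl⟩
      calc αf (t + m) ≤ βf (t + m) := hαβ _
      _ ≤ βf (0 + m) := hβs_anti (Nat.zero_le t)
      _ = βf m := by rw [Nat.zero_add]
    set a := ⨆ t, αf (t + m) with ha_def
    have hαs_tend : Tendsto (fun t => αf (t + m)) atTop (nhds a) :=
      tendsto_atTop_ciSup hαs_mono hbddα
    have ha_pos : 0 < a := by
      have h0 : αf (0 + m) ≤ a := le_ciSup hbddα 0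
      rw [Nat.zero_add] at h0
      exact lt_of_lt_of_le (hαpos m le_rfl) h0
    have hRtend : Tendsto (fun n => βf n / αf n) atTop (nhds 1) := by
      have hCRt : ∀ p : Fin d × Fin d, Tendsto (fun n =>
          (fwdProd A m n k p.1 * fwdProd A m n s p.2) /
            (fwdProd A m n k p.2 * fwdProd A m n s p.1)) atTop (nhds 1) := by
        intro p
        rcases eq_or_ne p.1 p.2 with hpp | hpp
        · apply Tendsto.congr' _ (tendsto_const_nhds (x := (1:ℝ)))
          filter_upwards [eventually_ge_atTop m] with n hn
          rw [hpp, div_self (mul_pos (hpos n hn k p.2) (hpos n hn s p.2)).ne']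
        · rw [tendsto_order]
          constructor
          · intro b hb
            rcases le_or_gt b 0 with hb0 | hb0
            · filter_upwards [eventually_ge_atTop m] with n hn
              exact lt_of_le_of_lt hb0 (div_pos (mul_pos (hpos n hn k p.1) (hpos n hn s p.2))
                (mul_pos (hpos n hn k p.2) (hpos n hn s p.1)))
            · have hinv : (1:ℝ) < 1 / b := by
                rw [lt_div_iff₀ hb0]; linarith
              filter_upwards [key p.2 p.1 (Ne.symm hpp) (1/b) hinv, eventually_ge_atTop m]
                with n hn hnm
              have h1 : 0 < fwdProd A m n k p.1 * fwdProd A m n s p.2 :=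
                mul_pos (hpos n hnm k p.1) (hpos n hnm s p.2)
              have h2 : 0 < fwdProd A m n k p.2 * fwdProd A m n s p.1 :=
                mul_pos (hpos n hnm k p.2) (hpos n hnm s p.1)
              rw [div_lt_div_iff₀ h1 hb0] at hn
              rw [lt_div_iff₀ h2]
              nlinarith [hn]
          · intro b hb
            exact key p.1 p.2 hpp b hb
      have hsupC := tendsto_finset_sup' (univ : Finset (Fin d × Fin d)) univ_nonempty
        (g := fun _ => (1:ℝ)) (fun p _ => hCRt p)
      rw [Finset.sup'_const] at hsupC
      apply tendsto_of_tendsto_of_tendsto_of_le_of_le' tendsto_const_nhds hsupC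
      · filter_upwards [eventually_ge_atTop m] with n hn
        rw [le_div_iff₀ (hαpos n hn)]
        linarith [hαβ n]
      · filter_upwards [eventually_ge_atTop m] with n hn
        obtain ⟨i0, -, hi0⟩ := exists_mem_eq_sup' (univ_nonempty (α := Fin d)) (rat n)
        obtain ⟨j0, -, hj0⟩ := exists_mem_eq_inf' (univ_nonempty (α := Fin d)) (rat n)
        have hbn : βf n = rat n i0 := hi0
        have han : αf n = rat n j0 := hj0
        show βf n / αf n ≤ _
        rw [hbn, han]
        have heq := div_ratio_eq (x := fun t => fwdProd A m n k t)
          (y := fun t => fwdProd A m n s t) (fun t => hpos n hn k t) (fun t => hpos n hn s t) i0 j0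
        exact le_trans (le_of_eq heq)
          (le_sup' (f := fun p : Fin d × Fin d => (fwdProd A m n k p.1 * fwdProd A m n s p.2) /
            (fwdProd A m n k p.2 * fwdProd A m n s p.1)) (mem_univ (i0, j0)))
    have hβs_tend : Tendsto (fun t => βf (t + m)) atTop (nhds a) := by
      have h1 : Tendsto (fun t => αf (t + m) * (βf (t + m) / αf (t + m))) atTop (nhds (a * 1)) :=
        hαs_tend.mul ((tendsto_add_atTop_iff_nat m).2 hRtend)
      rw [mul_one] at h1
      apply h1.congr
      intro t
      rw [mul_comm, div_mul_cancel₀ _ (hαpos (t + m) (Nat.le_add_left m t)).ne']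
    refine ⟨a, ha_pos, fun i => ?_⟩
    have hiter : Tendsto (fun t => rat (t + m) i) atTop (nhds a) := by
      apply tendsto_of_tendsto_of_tendsto_of_le_of_le hαs_tend hβs_tend
      · intro t; exact inf'_le _ (mem_univ i)
      · intro t; exact le_sup' _ (mem_univ i)
    exact (tendsto_add_atTop_iff_nat m).1 hiter
  · -- row proportionality ⇒ τ → 0
    intro h
    have hnn : ∀ n, 0 ≤ birkhoffCoeff (fwdProd A m n) := fun n =>
      birkhoffCoeff_nonneg fun v hv k' => fwdProd_mulVec_pos (fun t a b => hA t a b) m n hv k'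
    rw [tendsto_order]
    constructor
    · intro b hb
      exact Eventually.of_forall fun n => lt_of_lt_of_le hb (hnn n)
    · intro b hb
      set g : ℝ → ℝ := fun η => max (Real.sqrt (Real.log (1 + η)))
        (η * Real.exp (Real.sqrt (Real.log (1 + η)))) with hg_def
      have hgcont : ContinuousAt g 0 := by
        have h1 : ContinuousAt (fun η : ℝ => Real.log (1 + η)) 0 :=
          ContinuousAt.log (by fun_prop) (by norm_num)
        have h2 : ContinuousAt (fun η : ℝ => Real.sqrt (Real.log (1 + η))) 0 :=
          Real.continuous_sqrt.continuousAt.comp h1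
        exact h2.max (continuousAt_id.mul (Real.continuous_exp.continuousAt.comp h2))
      have hg0 : g 0 = 0 := by
        rw [hg_def]
        norm_num
      have hgev : ∀ᶠ η in nhds (0:ℝ), g η < b :=
        Tendsto.eventually_lt_const (by rw [hg0]; exact hb) hgcont
      obtain ⟨r, hr, hball⟩ := Metric.eventually_nhds_iff.1 hgev
      set η := r / 2 with hη_def
      have hηpos : 0 < η := half_pos hr
      have hgη : g η < b := by
        apply hball
        rw [Real.dist_eq, sub_zero, abs_of_pos hηpos]
        rw [hη_def]
        linarith
      have hCRt : ∀ q : (Fin d × Fin d) × Fin d × Fin d, Tendsto (fun n =>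
          (fwdProd A m n q.1.1 q.2.1 * fwdProd A m n q.1.2 q.2.2) /
            (fwdProd A m n q.1.1 q.2.2 * fwdProd A m n q.1.2 q.2.1)) atTop (nhds 1) := by
        intro q
        obtain ⟨a, hapos, haconv⟩ := h q.1.1 q.1.2
        have h1 : Tendsto (fun n => (fwdProd A m n q.1.1 q.2.1 / fwdProd A m n q.1.2 q.2.1) /
            (fwdProd A m n q.1.1 q.2.2 / fwdProd A m n q.1.2 q.2.2)) atTop (nhds (a / a)) :=
          (haconv q.2.1).div (haconv q.2.2) hapos.ne'
        rw [div_self hapos.ne'] at h1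
        apply h1.congr'
        filter_upwards [eventually_ge_atTop m] with n hn
        exact div_ratio_eq (x := fun t => fwdProd A m n q.1.1 t)
          (y := fun t => fwdProd A m n q.1.2 t)
          (fun t => hpos n hn _ t) (fun t => hpos n hn _ t) q.2.1 q.2.2
      have hev : ∀ᶠ n in atTop, ∀ q : (Fin d × Fin d) × Fin d × Fin d,
          (fwdProd A m n q.1.1 q.2.1 * fwdProd A m n q.1.2 q.2.2) /
            (fwdProd A m n q.1.1 q.2.2 * fwdProd A m n q.1.2 q.2.1) < 1 + η := by
        rw [Filter.eventually_all]
        intro q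
        exact Tendsto.eventually_lt_const (by linarith) (hCRt q)
      filter_upwards [hev, eventually_ge_atTop m] with n hcr hnm
      have hK : (1:ℝ) ≤ 1 + η := by linarith
      have hcr' : ∀ i' j' k' s', fwdProd A m n k' i' * fwdProd A m n s' j' ≤
          (1 + η) * (fwdProd A m n k' j' * fwdProd A m n s' i') := by
        intro i' j' k' s'
        have h2 := hcr ((k', s'), (i', j'))
        have h3 : 0 < fwdProd A m n k' j' * fwdProd A m n s' i' :=
          mul_pos (hpos n hnm k' j') (hpos n hnm s' i')
        rw [div_lt_iff₀ h3] at h2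
        linarith [h2]
      have h4 := birkhoff_le (hpos n hnm) hK hcr'
      have h5 : max (Real.sqrt (Real.log (1 + η)))
          ((1 + η - 1) * Real.exp (Real.sqrt (Real.log (1 + η)))) = g η := by
        rw [hg_def]
        norm_num
      rw [h5] at h4
      exact lt_of_le_of_lt h4 hgη
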